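/- arXiv:1806.08962 — 3 statements merged into one kernel-verified Lean document; each statement's English description precedes it below -/
import Mathlib

section
/- Assume c₂ = −1. Let α ∈ U be τ-rational with c := B_τ(α, α) invertible in k. Then the composite k-linear operator r_{𝒯α} ∘ r_α : U → U commutes with the τ-operator 𝒯, i.e. 𝒯 ∘ (r_{𝒯α} ∘ r_α) = (r_{𝒯α} ∘ r_α) ∘ 𝒯. -/
open scoped BigOperators

section Common

variable {k : Type*} [CommRing k] {l : Type*} [CommRing l] [Algebra k l]

/-- the standard `l`-bilinear dot product on `𝒰 = lⁿ`. -/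
def dotU {n : ℕ} (u v : Fin n → l) : l := ∑ i, u i * v i

/-- the `τ`-form `B_τ` on `U`. -/
noncomputable def tauForm (b : Module.Basis (Fin 2) k l) {n : ℕ} (u v : Fin n → l) : k :=
  b.repr (dotU u v) 0

/-- the `k`-linear reflection `r_α(u) = u − 2c⁻¹·B_τ(u, α)·α` of `U`, where `cinv` is the
inverse of `c = B_τ(α, α)`. -/
noncomputable def reflU (b : Module.Basis (Fin 2) k l) {n : ℕ} (cinv : k) (α u : Fin n → l) : Fin n → l :=
  u - (2 * cinv * tauForm b u α) • α

end Common

/-- Assume `c₂ = −1`.  Let `α ∈ U` be `τ`-rational with `c := B_τ(α, α)`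
invertible in `k`.  Then the composite `k`-linear operator `r_{𝒯α} ∘ r_α : U → U` commutes
with the `τ`-operator `𝒯` (which is `u ↦ τ • u`):
`𝒯 ∘ (r_{𝒯α} ∘ r_α) = (r_{𝒯α} ∘ r_α) ∘ 𝒯`. -/
theorem double_reflection_commutes_with_tauOp
    (k : Type*) [CommRing k] [IsDomain k] (ιk : k →+* ℝ) (hιk : Function.Injective ιk)
    (l : Type*) [CommRing l] [Algebra k l]
    (c₁ c₂ : k) (τ σ : l) (b : Module.Basis (Fin 2) k l) (hb0 : b 0 = 1) (hb1 : b 1 = τ)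
    (hτ : τ ^ 2 = algebraMap k l c₁ * τ - algebraMap k l c₂)
    (hσ : σ = algebraMap k l c₁ - τ)
    (hc₂ : IsUnit c₂) (hD : IsUnit (c₁ ^ 2 - 4 * c₂))
    -- `c₂ = −1`
    (hc₂' : c₂ = -1)
    -- `α` is `τ`-rational : `α ≠ 0` and `(α_l · α_l) = c·1 ∈ k·1`
    (n : ℕ) (α : Fin n → l) (hα : α ≠ 0)
    (c : k) (hrat : dotU α α = algebraMap k l c)
    -- `c = B_τ(α, α)` is invertible in `k`, with inverse `cinv`
    (hc : c = tauForm b α α) (cinv : k) (hcinv : c * cinv = 1) :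
    ∀ u : Fin n → l,
      τ • reflU b cinv (τ • α) (reflU b cinv α u) =
        reflU b cinv (τ • α) (reflU b cinv α (τ • u)) := by
  subst hc₂'
  have hτ' : τ * τ = algebraMap k l c₁ * τ + 1 := by
    rw [pow_two] at hτ
    rw [hτ]; simp
  -- representation of an element of l
  have hx : ∀ x : l, x = algebraMap k l (b.repr x 0) + algebraMap k l (b.repr x 1) * τ := by
    intro x
    conv_lhs => rw [← b.sum_repr x]
    rw [Fin.sum_univ_two, hb0, hb1, Algebra.smul_def, Algebra.smul_def, mul_one]
  have reprc0 : ∀ a d : k, b.repr (algebraMap k l a + algebraMap k l d * τ) 0 = a := by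
    intro a d
    have h : algebraMap k l a + algebraMap k l d * τ = a • b 0 + d • b 1 := by
      rw [hb0, hb1, Algebra.smul_def, Algebra.smul_def, mul_one]
    rw [h]
    simp [Finsupp.single_apply]
  have reprc1 : ∀ a d : k, b.repr (algebraMap k l a + algebraMap k l d * τ) 1 = d := by
    intro a d
    have h : algebraMap k l a + algebraMap k l d * τ = a • b 0 + d • b 1 := by
      rw [hb0, hb1, Algebra.smul_def, Algebra.smul_def, mul_one]
    rw [h]
    simp [Finsupp.single_apply]
  -- multiplication by τ on coordinates (using c₂ = -1)
  have key : ∀ x : l, τ * x = algebraMap k l (b.repr x 1)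
      + algebraMap k l (b.repr x 0 + c₁ * b.repr x 1) * τ := by
    intro x
    conv_lhs => rw [hx x]
    rw [map_add, map_mul]
    linear_combination (algebraMap k l (b.repr x 1)) * hτ'
  have key0 : ∀ x : l, b.repr (τ * x) 0 = b.repr x 1 := by
    intro x; rw [key x, reprc0]
  have key1 : ∀ x : l, b.repr (τ * x) 1 = b.repr x 0 + c₁ * b.repr x 1 := by
    intro x; rw [key x, reprc1]
  have hsm0 : ∀ (x : k) (y : l), b.repr (algebraMap k l x * y) 0 = x * b.repr y 0 := by
    intro x y; rw [← Algebra.smul_def, map_smul]; simp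
  -- dot product facts
  have dsmul : ∀ (x : l) (u v : Fin n → l), dotU (x • u) v = x * dotU u v := by
    intro x u v; simp [dotU, Finset.mul_sum, mul_assoc]
  have dsmul' : ∀ (x : l) (u v : Fin n → l), dotU u (x • v) = x * dotU u v := by
    intro x u v; simp only [dotU, Finset.mul_sum, Pi.smul_apply, smul_eq_mul]
    exact Finset.sum_congr rfl fun i _ => by ring
  have dksmul : ∀ (a : k) (u v : Fin n → l),
      dotU (a • u) v = algebraMap k l a * dotU u v := by
    intro a u v
    simp only [dotU, Finset.mul_sum, Pi.smul_apply, Algebra.smul_def]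
    exact Finset.sum_congr rfl fun i _ => by ring
  have dsub : ∀ (u w v : Fin n → l), dotU (u - w) v = dotU u v - dotU w v := by
    intro u w v; simp [dotU, sub_mul, Finset.sum_sub_distrib]
  -- key vanishing : B(α, τ•α) = 0
  have hαα0 : b.repr (dotU α (τ • α)) 0 = 0 := by
    rw [dsmul', hrat, key0]
    have h : algebraMap k l c = algebraMap k l c + algebraMap k l 0 * τ := by simp
    rw [h, reprc1]
  intro u
  set r0 : k := b.repr (dotU u α) 0 with hr0
  set r1 : k := b.repr (dotU u α) 1 with hr1
  have T1 : tauForm b u α = r0 := rfl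
  have T3 : tauForm b (τ • u) α = r1 := by
    rw [tauForm, dsmul, key0]
  have hL : reflU b cinv α u = u - (2 * cinv * r0) • α := by rw [reflU, T1]
  have hR : reflU b cinv α (τ • u) = τ • u - (2 * cinv * r1) • α := by rw [reflU, T3]
  have T2 : tauForm b (u - (2 * cinv * r0) • α) (τ • α) = r1 := by
    rw [tauForm, dsub, map_sub, Finsupp.sub_apply, dksmul, hsm0, hαα0, dsmul', key0, mul_zero, sub_zero]
  have T4 : tauForm b (τ • u - (2 * cinv * r1) • α) (τ • α) = r0 + c₁ * r1 := by
    rw [tauForm, dsub, map_sub, Finsupp.sub_apply, dksmul, hsm0, hαα0, dsmul', dsmul, key0, key1,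
      mul_zero, sub_zero]
  rw [hL, hR, reflU, reflU, T2, T4]
  funext i
  simp only [Pi.smul_apply, Pi.sub_apply, smul_eq_mul]
  have h2 : (algebraMap k l) 2 = 2 := map_ofNat _ 2
  simp only [Algebra.smul_def, map_mul, map_add, map_ofNat, h2]
  linear_combination (-((2:l) * algebraMap k l cinv * algebraMap k l r1 * α i)) * hτ'
end

section
/- Assume c₂ = −1. Let Δ_rat be a set of τ-rational elements of U, each with B_τ(α, α) invertible in k, and let Δ^𝒯 be a set of elements β ∈ U with 𝒯β = β and B_τ(β, β) invertible in k. Then every element of the subgroup of GL_k(U) generated by the operators { r_{𝒯α} ∘ r_α : α ∈ Δ_rat } ∪ { r_β : β ∈ Δ^𝒯 } commutes with the τ-operator 𝒯. -/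
open scoped BigOperators

section Aux

variable {k : Type*} [CommRing k] {l : Type*} [CommRing l] [Algebra k l]
  {c₁ : k} {τ : l} (b : Module.Basis (Fin 2) k l)

variable (hb0 : b 0 = 1) (hb1 : b 1 = τ) (hτ2 : τ * τ = algebraMap k l c₁ * τ + 1)

include hb0 hb1 in

lemma aux_repr0 (x y : k) : b.repr (x • (1:l) + y • τ) 0 = x := by
  rw [← hb0, ← hb1]
  simp [Finsupp.single_apply]

include hb0 hb1 in
lemma aux_repr1 (x y : k) : b.repr (x • (1:l) + y • τ) 1 = y := by
  rw [← hb0, ← hb1]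
  simp [Finsupp.single_apply]

include hb0 hb1 in
lemma aux_decomp (z : l) : z = b.repr z 0 • (1:l) + b.repr z 1 • τ := by
  conv_lhs => rw [← b.sum_repr z]
  rw [Fin.sum_univ_two, hb0, hb1]

include hτ2 in
lemma aux_tau_mul (x y : k) :
    τ * (x • (1:l) + y • τ) = y • (1:l) + (x + c₁ * y) • τ := by
  simp only [Algebra.smul_def, map_add, map_mul, mul_one]
  rw [mul_add, show τ * (algebraMap k l y * τ) = algebraMap k l y * (τ * τ) by ring, hτ2]
  ring

include hb0 hb1 hτ2 in
lemma aux_mul0 (z : l) : b.repr (τ * z) 0 = b.repr z 1 := by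
  conv_lhs => rw [aux_decomp b hb0 hb1 z, aux_tau_mul hτ2]
  exact aux_repr0 b hb0 hb1 _ _

include hb0 hb1 hτ2 in
lemma aux_mul1 (z : l) : b.repr (τ * z) 1 = b.repr z 0 + c₁ * b.repr z 1 := by
  conv_lhs => rw [aux_decomp b hb0 hb1 z, aux_tau_mul hτ2]
  exact aux_repr1 b hb0 hb1 _ _

lemma aux_dot_tau_left {n : ℕ} (u v : Fin n → l) : dotU (τ • u) v = τ * dotU u v := by
  simp [dotU, Finset.mul_sum, mul_assoc]

lemma aux_dot_tau_right {n : ℕ} (u v : Fin n → l) : dotU u (τ • v) = τ * dotU u v := by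
  simp [dotU, Finset.mul_sum, mul_left_comm]

lemma aux_dot_sub_smul {n : ℕ} (u w v : Fin n → l) (s : k) :
    dotU (u - s • w) v = dotU u v - s • dotU w v := by
  simp [dotU, sub_mul, Finset.sum_sub_distrib, Finset.smul_sum, smul_mul_assoc]

lemma aux_tauForm_sub_smul {n : ℕ} (u w v : Fin n → l) (s : k) :
    tauForm b (u - s • w) v = tauForm b u v - s * tauForm b w v := by
  simp [tauForm, aux_dot_sub_smul]

end Aux


/-- Assume `c₂ = −1`.  Let `Δ_rat` be a set of `τ`-rational elements of
`U`, each with `B_τ(α, α)` invertible in `k`, and let `Δ^𝒯` be a set of elements `β ∈ U`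
with `𝒯β = β` and `B_τ(β, β)` invertible in `k`.  Then every element of the subgroup of
`GL_k(U)` generated by the operators `{ r_{𝒯α} ∘ r_α : α ∈ Δ_rat } ∪ { r_β : β ∈ Δ^𝒯 }`
commutes with the `τ`-operator `𝒯 : u ↦ τ • u`. -/
theorem generated_subgroup_commutes_with_tauOp
    (k : Type*) [CommRing k] [IsDomain k] (ιk : k →+* ℝ) (hιk : Function.Injective ιk)
    (l : Type*) [CommRing l] [Algebra k l]
    (c₁ c₂ : k) (τ σ : l) (b : Module.Basis (Fin 2) k l) (hb0 : b 0 = 1) (hb1 : b 1 = τ)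
    (hτ : τ ^ 2 = algebraMap k l c₁ * τ - algebraMap k l c₂)
    (hσ : σ = algebraMap k l c₁ - τ)
    (hc₂ : IsUnit c₂) (hD : IsUnit (c₁ ^ 2 - 4 * c₂))
    (hc₂' : c₂ = -1)
    (n : ℕ)
    (Δrat ΔT : Set (Fin n → l)) (cinv : (Fin n → l) → k)
    -- every `α ∈ Δ_rat` is `τ`-rational with `B_τ(α, α)` invertible (inverse `cinv α`)
    (hrat : ∀ α ∈ Δrat, α ≠ 0 ∧ ∃ c : k, dotU α α = algebraMap k l c)
    (hcinvrat : ∀ α ∈ Δrat, tauForm b α α * cinv α = 1)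
    -- every `β ∈ Δ^𝒯` is `𝒯`-invariant with `B_τ(β, β)` invertible (inverse `cinv β`)
    (hT : ∀ β ∈ ΔT, τ • β = β)
    (hcinvT : ∀ β ∈ ΔT, tauForm b β β * cinv β = 1) :
    ∀ g ∈ Subgroup.closure
        ({g : (Fin n → l) ≃ₗ[k] (Fin n → l) |
            (∃ α ∈ Δrat, ∀ u, g u = reflU b (cinv α) (τ • α) (reflU b (cinv α) α u)) ∨
            (∃ β ∈ ΔT, ∀ u, g u = reflU b (cinv β) β u)}),
      ∀ u : Fin n → l, g (τ • u) = τ • g u := by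
  have hτ2 : τ * τ = algebraMap k l c₁ * τ + 1 := by
    have := hτ
    rw [hc₂'] at this
    rw [← sq]
    simpa [sub_neg_eq_add] using this
  -- the subgroup of equivalences commuting with the τ-operator
  let H : Subgroup ((Fin n → l) ≃ₗ[k] (Fin n → l)) :=
  { carrier := {g | ∀ u, g (τ • u) = τ • g u}
    one_mem' := fun u => rfl
    mul_mem' := by
      intro a c ha hc u
      show a (c (τ • u)) = τ • a (c u)
      rw [hc, ha]
    inv_mem' := by
      intro a ha u
      apply a.injective
      show a ((a⁻¹ : _) (τ • u)) = a (τ • (a⁻¹ : _) u)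
      rw [ha ((a⁻¹ : _) u)]
      show a (a.symm (τ • u)) = τ • a (a.symm u)
      simp }
  suffices h : Subgroup.closure
      ({g : (Fin n → l) ≃ₗ[k] (Fin n → l) |
          (∃ α ∈ Δrat, ∀ u, g u = reflU b (cinv α) (τ • α) (reflU b (cinv α) α u)) ∨
          (∃ β ∈ ΔT, ∀ u, g u = reflU b (cinv β) β u)}) ≤ H by
    exact fun g hg u => h hg u
  rw [Subgroup.closure_le]
  rintro g (⟨α, hα, hgα⟩ | ⟨β, hβ, hgβ⟩)
  · -- the r_{τα} ∘ r_α case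
    intro u
    obtain ⟨c, hc⟩ := (hrat α hα).2
    set s : k := 2 * cinv α with hs
    set p : k := b.repr (dotU u α) 0 with hp
    set q : k := b.repr (dotU u α) 1 with hq
    have e1 : tauForm b u α = p := rfl
    have e2 : tauForm b (τ • u) α = q := by
      rw [tauForm, aux_dot_tau_left, aux_mul0 b hb0 hb1 hτ2 _]
    have e3 : tauForm b u (τ • α) = q := by
      rw [tauForm, aux_dot_tau_right, aux_mul0 b hb0 hb1 hτ2 _]
    have e4 : tauForm b (τ • u) (τ • α) = p + c₁ * q := by
      rw [tauForm, aux_dot_tau_left, aux_dot_tau_right, aux_mul0 b hb0 hb1 hτ2 _,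
        aux_mul1 b hb0 hb1 hτ2 _]
    have e5 : tauForm b α (τ • α) = 0 := by
      rw [tauForm, aux_dot_tau_right, aux_mul0 b hb0 hb1 hτ2 _, hc]
      rw [show algebraMap k l c = c • (1:l) + (0:k) • τ by simp [Algebra.smul_def]]
      exact aux_repr1 b hb0 hb1 _ _
    have hττα : τ • (τ • α) = α + c₁ • (τ • α) := by
      funext i
      simp only [Pi.smul_apply, Pi.add_apply, smul_eq_mul, ← mul_assoc, hτ2]
      rw [Algebra.smul_def]
      ring
    rw [hgα, hgα]
    rw [reflU, reflU, reflU, reflU]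
    rw [aux_tauForm_sub_smul, aux_tauForm_sub_smul]
    rw [e1, e2, e3, e4, e5]
    simp only [mul_zero, sub_zero]
    rw [smul_sub, smul_sub, smul_comm τ (2 * cinv α * p), smul_comm τ (2 * cinv α * q), hττα]
    module
  · -- the r_β case
    intro u
    rw [hgβ, hgβ, reflU, reflU]
    have : tauForm b (τ • u) β = tauForm b u β := by
      rw [tauForm, tauForm, aux_dot_tau_left, ← aux_dot_tau_right, hT β hβ]
    rw [this, smul_sub, smul_comm τ, hT β hβ]
end

section
/- Assume c₂ = −1. Let θ ∈ U and let α ∈ U be τ-rational. Then B_τ(π_τ(θ), π_τ(α)) = (1/(τ−σ)²)·( (1 + σ²)·B_τ(θ, α) + (τ − σ)·B_τ(θ, 𝒯α) ) in l. In particular, if l is an integral domain contained in ℝ with τ > σ, and B_τ(θ, α) ≥ 0 and B_τ(θ, 𝒯α) ≥ 0, then B_τ(π_τ(θ), π_τ(α)) ≥ 0. -/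
open scoped BigOperators

section Common

variable {k : Type*} [CommRing k] {l : Type*} [CommRing l] [Algebra k l]

/-- the coordinate embedding `U → U_l = (l²)ⁿ`. -/
noncomputable def emb (b : Module.Basis (Fin 2) k l) {n : ℕ} (u : Fin n → l) : Fin n → l × l :=
  fun i => (algebraMap k l (b.repr (u i) 0), algebraMap k l (b.repr (u i) 1))

end Common

section Ul
variable {l : Type*} [CommRing l]

/-- the `τ`-operator `𝒯_l` on `U_l = (l²)ⁿ` in coordinates. -/
def tauOp (c₁ c₂ : l) (n : ℕ) : (Fin n → l × l) →ₗ[l] (Fin n → l × l) where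
  toFun v := fun i => (-c₂ * (v i).2, (v i).1 + c₁ * (v i).2)
  map_add' x y := by
    funext i
    refine Prod.ext ?_ ?_ <;> simp <;> ring
  map_smul' c x := by
    funext i
    refine Prod.ext ?_ ?_ <;> simp <;> ring

/-- the `l`-bilinear extension of the `τ`-form to `U_l`. -/
def tauForml (c₂ : l) {n : ℕ} (v w : Fin n → l × l) : l :=
  ∑ i, ((v i).1 * (w i).1 - c₂ * (v i).2 * (w i).2)

/-- the projection `π_τ = (1/(τ−σ))(𝒯_l − σ·id)` onto the `τ`-eigenspace. -/
def piTau (c₁ c₂ σ invτσ : l) {n : ℕ} (v : Fin n → l × l) : Fin n → l × l :=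
  invτσ • (tauOp c₁ c₂ n v - σ • v)

end Ul

/-- Assume `c₂ = −1`.  Let `θ ∈ U` and let `α ∈ U` be `τ`-rational.
Then `B_τ(π_τ(θ), π_τ(α)) = (1/(τ−σ)²)·((1 + σ²)·B_τ(θ, α) + (τ − σ)·B_τ(θ, 𝒯α))` in
`l`.  In particular, if `l` is an integral domain contained in `ℝ` with `τ > σ`, and
`B_τ(θ, α) ≥ 0` and `B_τ(θ, 𝒯α) ≥ 0`, then `B_τ(π_τ(θ), π_τ(α)) ≥ 0`. -/
theorem tauForm_of_projections
    (k : Type*) [CommRing k] [IsDomain k] (ιk : k →+* ℝ) (hιk : Function.Injective ιk)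
    (l : Type*) [CommRing l] [Algebra k l]
    (ιl : l →+* ℝ) (hιl : Function.Injective ιl)
    (c₁ c₂ : k) (τ σ : l) (b : Module.Basis (Fin 2) k l) (hb0 : b 0 = 1) (hb1 : b 1 = τ)
    (hτ : τ ^ 2 = algebraMap k l c₁ * τ - algebraMap k l c₂)
    (hσ : σ = algebraMap k l c₁ - τ)
    (hc₂ : IsUnit c₂) (hD : IsUnit (c₁ ^ 2 - 4 * c₂))
    (hc₂' : c₂ = -1)
    (invτσ : l) (hinv : invτσ * (τ - σ) = 1)
    (n : ℕ) (θ α : Fin n → l)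
    -- `α` is `τ`-rational
    (hα : α ≠ 0) (c : k) (hrat : dotU α α = algebraMap k l c) :
    -- the identity in `l`
    (tauForml (algebraMap k l c₂)
        (piTau (algebraMap k l c₁) (algebraMap k l c₂) σ invτσ (emb b θ))
        (piTau (algebraMap k l c₁) (algebraMap k l c₂) σ invτσ (emb b α)) =
      invτσ ^ 2 * ((1 + σ ^ 2) * algebraMap k l (tauForm b θ α) +
        (τ - σ) * algebraMap k l (tauForm b θ (τ • α)))) ∧
    -- the consequence for `l ⊆ ℝ` with `τ > σ`
    (ιl σ < ιl τ →
      0 ≤ ιk (tauForm b θ α) →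
      0 ≤ ιk (tauForm b θ (τ • α)) →
      (∀ x : k, ιl (algebraMap k l x) = ιk x) →
      0 ≤ ιl (tauForml (algebraMap k l c₂)
          (piTau (algebraMap k l c₁) (algebraMap k l c₂) σ invτσ (emb b θ))
          (piTau (algebraMap k l c₁) (algebraMap k l c₂) σ invτσ (emb b α)))) := by
  set A := algebraMap k l with hA
  have h2 : A c₂ = -1 := by rw [hc₂', map_neg, map_one]
  have hc1 : A c₁ = σ + τ := by rw [hσ]; ring
  have hστ : σ * τ = -1 := by linear_combination -hτ - τ * hc1 + h2
  -- reconstruction of elements of l from their coordinates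
  have hrepr : ∀ u : l, A (b.repr u 0) + A (b.repr u 1) * τ = u := by
    intro u
    have h := b.sum_repr u
    rw [Fin.sum_univ_two, hb0, hb1] at h
    simpa [Algebra.smul_def] using h
  -- coordinates of an element written in the basis
  have hcoords : ∀ x y : k, b.repr (A x + A y * τ) 0 = x := by
    intro x y
    have hxy : A x + A y * τ = x • b 0 + y • b 1 := by
      rw [hb0, hb1, Algebra.smul_def, Algebra.smul_def, mul_one]
    rw [hxy, map_add, map_smul, map_smul, b.repr_self, b.repr_self]
    simp [Finsupp.single_apply]
  -- the projection in simple form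
  have hpi : ∀ u : Fin n → l, piTau (A c₁) (A c₂) σ invτσ (emb b u) =
      fun i => (invτσ * (-σ * u i), invτσ * u i) := by
    intro u
    funext i
    refine Prod.ext ?_ ?_
    · show invτσ * ((-(A c₂) * (A (b.repr (u i) 1)) - σ * A (b.repr (u i) 0))) =
        invτσ * (-σ * u i)
      linear_combination (-(invτσ * σ)) * hrepr (u i) - invτσ * A (b.repr (u i) 1) * h2 +
        invτσ * A (b.repr (u i) 1) * hστ
    · show invτσ * ((A (b.repr (u i) 0) + A c₁ * A (b.repr (u i) 1)
          - σ * A (b.repr (u i) 1))) = invτσ * u i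
      linear_combination invτσ * hrepr (u i) + invτσ * A (b.repr (u i) 1) * hc1
  set p := tauForm b θ α with hp
  set q := b.repr (dotU θ α) 1 with hqdef
  have hdot : dotU θ α = A p + A q * τ := (hrepr _).symm
  have hdotτ : dotU θ (τ • α) = τ * dotU θ α := by
    simp only [dotU, Finset.mul_sum, Pi.smul_apply, smul_eq_mul]
    exact Finset.sum_congr rfl fun i _ => by ring
  have h3 : dotU θ (τ • α) = A (q) + A (p + c₁ * q) * τ := by
    rw [hdotτ, hdot, map_add, map_mul]
    linear_combination A q * hτ - A q * h2
  have hq : tauForm b θ (τ • α) = q := by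
    rw [tauForm, h3, hcoords]
  -- the main identity
  have hLHS : tauForml (A c₂)
      (piTau (A c₁) (A c₂) σ invτσ (emb b θ))
      (piTau (A c₁) (A c₂) σ invτσ (emb b α)) =
      invτσ ^ 2 * (σ ^ 2 + 1) * dotU θ α := by
    rw [hpi θ, hpi α, tauForml, dotU, Finset.mul_sum]
    refine Finset.sum_congr rfl fun i _ => ?_
    rw [h2]
    ring
  have hmain : tauForml (A c₂)
      (piTau (A c₁) (A c₂) σ invτσ (emb b θ))
      (piTau (A c₁) (A c₂) σ invτσ (emb b α)) =
      invτσ ^ 2 * ((1 + σ ^ 2) * A (tauForm b θ α) +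
        (τ - σ) * A (tauForm b θ (τ • α))) := by
    rw [hLHS, hdot, ← hp, hq]
    linear_combination invτσ ^ 2 * A q * σ * hστ
  refine ⟨hmain, fun hlt h1 h2' hcompat => ?_⟩
  rw [hmain, map_mul, map_add, map_mul, map_mul, map_pow, map_add, map_sub,
    map_one, map_pow, hcompat, hcompat]
  have hinv' : ιl invτσ * (ιl τ - ιl σ) = 1 := by
    rw [← map_sub, ← map_mul, hinv, map_one]
  refine mul_nonneg (sq_nonneg _) (add_nonneg (mul_nonneg ?_ h1)
    (mul_nonneg (by linarith) h2'))
  positivity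
end
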